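/- (Kummer-type congruence for v-adic multiple zeta values.) Let e ≥ 1, r ≥ 1, and let (m_1,…,m_r), (l_1,…,l_r) ∈ ℤ_{≥0}^r satisfy m_i ≡ l_i mod (q^d − 1)·q^{(e−1)d} for all 1 ≤ i ≤ r. Then ζ_v(−m_1,…,−m_r) ≡ ζ_v(−l_1,…,−l_r) mod v^e in A, i.e., v^e divides ζ_v(−m_1,…,−m_r) − ζ_v(−l_1,…,−l_r). -/

import Mathlib

open Polynomial

/-- The power sum `S_i(-m)`: the sum of `n ^ m` over monic polynomials `n` of degree `i`. -/
noncomputable def powerSum (F : Type*) [Field F] [Fintype F] (i m : ℕ) : Polynomial F :=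
  ∑ᶠ n ∈ {n : Polynomial F | n.Monic ∧ n.natDegree = i}, n ^ m

/-- The restricted power sum `S̃_i(-m)`: the sum of `n ^ m` over monic polynomials `n` of
degree `i` not divisible by `v`. -/
noncomputable def powerSumV (F : Type*) [Field F] [Fintype F] (v : Polynomial F) (i m : ℕ) :
    Polynomial F :=
  ∑ᶠ n ∈ {n : Polynomial F | n.Monic ∧ n.natDegree = i ∧ ¬ v ∣ n}, n ^ m

/-- `ζ_∞(-m_1, …, -m_r)`, the ∞-adic multiple zeta value at nonpositive integers:
the sum over `i_1 > ⋯ > i_r ≥ 0` of `S_{i_1}(-m_1) ⋯ S_{i_r}(-m_r)`.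
Only `m 0, …, m (r-1)` are used.  The depth-0 value is `1`. -/
noncomputable def zetaInf (F : Type*) [Field F] [Fintype F] (r : ℕ) (m : ℕ → ℕ) :
    Polynomial F :=
  ∑ᶠ i ∈ {i : Fin r → ℕ | StrictAnti i}, ∏ j : Fin r, powerSum F (i j) (m (j : ℕ))

/-- `ζ⋆_∞(-m_1, …, -m_r)`, the ∞-adic multiple zeta star value at nonpositive integers:
the sum over `i_1 ≥ ⋯ ≥ i_r ≥ 0` of `S_{i_1}(-m_1) ⋯ S_{i_r}(-m_r)`. -/
noncomputable def zetaInfStar (F : Type*) [Field F] [Fintype F] (r : ℕ) (m : ℕ → ℕ) :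
    Polynomial F :=
  ∑ᶠ i ∈ {i : Fin r → ℕ | Antitone i}, ∏ j : Fin r, powerSum F (i j) (m (j : ℕ))

/-- `ζ_v(-m_1, …, -m_r)`, the v-adic multiple zeta value at nonpositive integers. -/
noncomputable def zetaV (F : Type*) [Field F] [Fintype F] (v : Polynomial F) (r : ℕ)
    (m : ℕ → ℕ) : Polynomial F :=
  ∑ᶠ i ∈ {i : Fin r → ℕ | StrictAnti i}, ∏ j : Fin r, powerSumV F v (i j) (m (j : ℕ))

/-- `ζ⋆_v(-m_1, …, -m_r)`, the v-adic multiple zeta star value at nonpositive integers. -/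
noncomputable def zetaVStar (F : Type*) [Field F] [Fintype F] (v : Polynomial F) (r : ℕ)
    (m : ℕ → ℕ) : Polynomial F :=
  ∑ᶠ i ∈ {i : Fin r → ℕ | Antitone i}, ∏ j : Fin r, powerSumV F v (i j) (m (j : ℕ))

/-- `ζ_{<d}(-m_1, …, -m_r)`, the truncated multiple zeta value:
the sum over `d > i_1 > ⋯ > i_r ≥ 0` of `S_{i_1}(-m_1) ⋯ S_{i_r}(-m_r)`. -/
noncomputable def zetaLt (F : Type*) [Field F] [Fintype F] (d r : ℕ) (m : ℕ → ℕ) :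
    Polynomial F :=
  ∑ᶠ i ∈ {i : Fin r → ℕ | StrictAnti i ∧ ∀ j, i j < d},
    ∏ j : Fin r, powerSum F (i j) (m (j : ℕ))

/-- `ζ⋆_{<d}(-m_1, …, -m_r)`, the truncated multiple zeta star value. -/
noncomputable def zetaLtStar (F : Type*) [Field F] [Fintype F] (d r : ℕ) (m : ℕ → ℕ) :
    Polynomial F :=
  ∑ᶠ i ∈ {i : Fin r → ℕ | Antitone i ∧ ∀ j, i j < d},
    ∏ j : Fin r, powerSum F (i j) (m (j : ℕ))

/-- `ζ_{<d}(-m)`, the depth-one truncated zeta value `Σ_{d > i ≥ 0} S_i(-m)`. -/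
noncomputable def zetaLtOne (F : Type*) [Field F] [Fintype F] (d m : ℕ) : Polynomial F :=
  ∑ᶠ i ∈ {i : ℕ | i < d}, powerSum F i m

section KummerAux

open Finset

variable {F : Type*} [Field F] [Fintype F]

lemma degLT_finite (i : ℕ) : {p : Polynomial F | p.degree < (i : ℕ)}.Finite := by
  have h1 : {p : Polynomial F | p.degree < (i : ℕ)} = ↑(Polynomial.degreeLT F i) := by
    ext p; simp [Polynomial.mem_degreeLT]
  rw [h1]
  have : Finite (Polynomial.degreeLT F i) :=
    Finite.of_equiv _ (Polynomial.degreeLTEquiv F i).toEquiv.symm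
  exact Set.toFinite _

noncomputable def Vfin (F : Type*) [Field F] [Fintype F] (i : ℕ) : Finset (Polynomial F) :=
  (degLT_finite i).toFinset

lemma mem_Vfin {i : ℕ} {p : Polynomial F} : p ∈ Vfin F i ↔ p.degree < (i : ℕ) := by
  simp [Vfin, Set.Finite.mem_toFinset]

lemma sum_Vfin_pow : ∀ i k : ℕ, k < i → ∑ w ∈ Vfin F i, w ^ k = 0 := by
  intro i
  induction i with
  | zero => intro k hk; omega
  | succ i ih =>
    intro k hk
    have hbij : ∑ w ∈ Vfin F (i+1), w ^ k
        = ∑ p ∈ (univ : Finset F) ×ˢ Vfin F i, (p.2 + C p.1 * X ^ i) ^ k := by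
      refine Finset.sum_nbij' (fun p => (p.coeff i, p - C (p.coeff i) * X ^ i))
        (fun p => p.2 + C p.1 * X ^ i) ?_ ?_ ?_ ?_ ?_
      · intro p hp
        rw [mem_Vfin] at hp
        rw [Finset.mem_product]
        refine ⟨Finset.mem_univ _, ?_⟩
        rw [mem_Vfin, degree_lt_iff_coeff_zero]
        intro j hj
        have hij : i ≤ j := hj
        rw [degree_lt_iff_coeff_zero] at hp
        rcases eq_or_lt_of_le hij with h | h
        · subst h
          simp [coeff_sub, coeff_C_mul, coeff_X_pow]
        · have hz : p.coeff j = 0 := hp j (by omega)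
          simp [coeff_sub, coeff_C_mul, coeff_X_pow, hz, Nat.ne_of_gt h]
      · intro p hp
        rw [Finset.mem_product, mem_Vfin] at hp
        rw [mem_Vfin]
        have h1 : (C p.1 * X ^ i).degree < ((i+1 : ℕ) : WithBot ℕ) :=
          lt_of_le_of_lt (degree_C_mul_X_pow_le _ _)
            ((Nat.cast_lt (α := WithBot ℕ)).mpr (Nat.lt_succ_self i))
        have h2 : p.2.degree < ((i+1 : ℕ) : WithBot ℕ) :=
          lt_of_lt_of_le hp.2 ((Nat.cast_le (α := WithBot ℕ)).mpr (Nat.le_succ i))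
        calc (p.2 + C p.1 * X ^ i).degree ≤ max p.2.degree (C p.1 * X ^ i).degree :=
              degree_add_le _ _
          _ < ((i+1 : ℕ) : WithBot ℕ) := max_lt h2 h1
      · intro p _
        simp
      · intro p hp
        rw [Finset.mem_product, mem_Vfin] at hp
        have hc : (p.2 + C p.1 * X ^ i).coeff i = p.1 := by
          have hz : p.2.coeff i = 0 := coeff_eq_zero_of_degree_lt hp.2
          simp [coeff_add, coeff_C_mul, coeff_X_pow, hz]
        ext
        · simp [hc]
        · simp [hc]
      · intro p _
        simp
    rw [hbij, Finset.sum_product]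
    simp_rw [add_pow]
    rw [Finset.sum_congr rfl (fun c _ => Finset.sum_comm), Finset.sum_comm]
    refine Finset.sum_eq_zero fun j hj => ?_
    rw [Finset.mem_range] at hj
    rcases eq_or_lt_of_le (Nat.lt_succ_iff.mp hj) with hjk | hjk
    · subst hjk
      simp only [Nat.sub_self, pow_zero, mul_one, Nat.choose_self, Nat.cast_one]
      have hcard : ((Fintype.card F : ℕ) : Polynomial F) = 0 := by
        rw [← map_natCast (C : F →+* Polynomial F)]
        simp [FiniteField.cast_card_eq_zero]
      rw [Finset.sum_const, Finset.card_univ, nsmul_eq_mul, hcard, zero_mul]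
    · refine Finset.sum_eq_zero fun c _ => ?_
      simp_rw [mul_assoc]
      rw [← Finset.sum_mul, ih j (by omega), zero_mul]

lemma monicDeg_finite (i : ℕ) : {n : Polynomial F | n.Monic ∧ n.natDegree = i}.Finite := by
  refine (degLT_finite (i+1)).subset fun n hn => ?_
  obtain ⟨h1, h2⟩ := hn
  have hdeg : n.degree = (i : WithBot ℕ) := by rw [degree_eq_natDegree h1.ne_zero, h2]
  simp only [Set.mem_setOf_eq, hdeg]
  exact_mod_cast Nat.lt_succ_self i

noncomputable def Mfin (F : Type*) [Field F] [Fintype F] (i : ℕ) : Finset (Polynomial F) :=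
  (monicDeg_finite i).toFinset

lemma mem_Mfin {i : ℕ} {n : Polynomial F} : n ∈ Mfin F i ↔ n.Monic ∧ n.natDegree = i := by
  simp [Mfin, Set.Finite.mem_toFinset]

lemma powerSum_eq_sum (i m : ℕ) : powerSum F i m = ∑ n ∈ Mfin F i, n ^ m :=
  finsum_mem_eq_finite_toFinset_sum _ (monicDeg_finite i)

lemma powerSum_eq_zero {i m : ℕ} (him : m < i) : powerSum F i m = 0 := by
  rw [powerSum_eq_sum]
  have hbij : ∑ n ∈ Mfin F i, n ^ m = ∑ w ∈ Vfin F i, (X ^ i + w) ^ m := by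
    refine Finset.sum_nbij' (fun n => n - X ^ i) (fun w => X ^ i + w) ?_ ?_ ?_ ?_ ?_
    · intro n hn
      rw [mem_Mfin] at hn
      rw [mem_Vfin, degree_lt_iff_coeff_zero]
      intro j hj
      rcases eq_or_lt_of_le hj with h | h
      · subst h
        have := hn.1.coeff_natDegree
        rw [hn.2] at this
        simp [coeff_sub, coeff_X_pow, this]
      · have hz : n.coeff j = 0 := coeff_eq_zero_of_natDegree_lt (by omega)
        simp [coeff_sub, coeff_X_pow, hz, Nat.ne_of_gt h]
    · intro w hw
      rw [mem_Vfin] at hw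
      have hdx : w.degree < (X ^ i : Polynomial F).degree := by
        rwa [degree_X_pow]
      have hdeg : (X ^ i + w : Polynomial F).degree = (i : WithBot ℕ) := by
        rw [degree_add_eq_left_of_degree_lt hdx, degree_X_pow]
      rw [mem_Mfin]
      exact ⟨monic_X_pow_add hw, natDegree_eq_of_degree_eq_some hdeg⟩
    · intro n _; ring
    · intro w _; ring
    · intro n _; ring_nf
  rw [hbij]
  have hexp : ∀ w ∈ Vfin F i, (X ^ i + w : Polynomial F) ^ m
      = ∑ j ∈ Finset.range (m+1), w ^ j * ((X : Polynomial F) ^ i) ^ (m - j) * (m.choose j) :=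
    fun w _ => by rw [add_comm, add_pow]
  rw [Finset.sum_congr rfl hexp, Finset.sum_comm]
  refine Finset.sum_eq_zero fun j hj => ?_
  rw [Finset.mem_range] at hj
  simp_rw [mul_assoc]
  rw [← Finset.sum_mul, sum_Vfin_pow i j (by omega), zero_mul]

lemma monicDegNd_finite (v : Polynomial F) (i : ℕ) :
    {n : Polynomial F | n.Monic ∧ n.natDegree = i ∧ ¬ v ∣ n}.Finite :=
  (monicDeg_finite i).subset fun n hn => ⟨hn.1, hn.2.1⟩

noncomputable def Pfin (F : Type*) [Field F] [Fintype F] (v : Polynomial F) (i : ℕ) :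
    Finset (Polynomial F) := (monicDegNd_finite v i).toFinset

lemma mem_Pfin {v : Polynomial F} {i : ℕ} {n : Polynomial F} :
    n ∈ Pfin F v i ↔ n.Monic ∧ n.natDegree = i ∧ ¬ v ∣ n := by
  simp [Pfin, Set.Finite.mem_toFinset]

lemma powerSumV_eq_sum (v : Polynomial F) (i m : ℕ) :
    powerSumV F v i m = ∑ n ∈ Pfin F v i, n ^ m :=
  finsum_mem_eq_finite_toFinset_sum _ (monicDegNd_finite v i)

lemma sum_Pfin_eq (v : Polynomial F) (hv : v.Monic) (hd : 0 < v.natDegree) {i m : ℕ}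
    (h : m + v.natDegree < i) : powerSumV F v i m = 0 := by
  classical
  set d := v.natDegree with hdef
  have hvne : v ≠ 0 := hv.ne_zero
  rw [powerSumV_eq_sum]
  have hsplit : Pfin F v i = (Mfin F i).filter (fun n => ¬ v ∣ n) := by
    ext n; simp [mem_Pfin, mem_Mfin, Finset.mem_filter, and_assoc]
  rw [hsplit]
  have htotal : ∑ n ∈ Mfin F i, n ^ m = 0 := by
    rw [← powerSum_eq_sum]; exact powerSum_eq_zero (by omega)
  have hdvd : ∑ n ∈ (Mfin F i).filter (fun n => v ∣ n), n ^ m = 0 := by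
    have hbij : ∑ n ∈ (Mfin F i).filter (fun n => v ∣ n), n ^ m
        = ∑ w ∈ Mfin F (i - d), (v * w) ^ m := by
      refine Finset.sum_nbij' (fun n => n /ₘ v) (fun w => v * w) ?_ ?_ ?_ ?_ ?_
      · intro n hn
        rw [Finset.mem_filter, mem_Mfin] at hn
        obtain ⟨⟨h1, h2⟩, h3⟩ := hn
        have heq : v * (n /ₘ v) = n := by
          have := modByMonic_add_div n v
          rwa [(modByMonic_eq_zero_iff_dvd hv).mpr h3, zero_add] at this
        have hmon : (n /ₘ v).Monic := hv.of_mul_monic_left (by rwa [heq])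
        rw [mem_Mfin]
        refine ⟨hmon, ?_⟩
        show (n /ₘ v).natDegree = i - d
        have := natDegree_mul hvne hmon.ne_zero
        rw [heq, h2] at this
        omega
      · intro w hw
        rw [mem_Mfin] at hw
        rw [Finset.mem_filter, mem_Mfin]
        exact ⟨⟨hv.mul hw.1, by rw [natDegree_mul hvne hw.1.ne_zero, hw.2]; omega⟩,
          Dvd.intro _ rfl⟩
      · intro n hn
        rw [Finset.mem_filter] at hn
        have := modByMonic_add_div n v
        rwa [(modByMonic_eq_zero_iff_dvd hv).mpr hn.2, zero_add] at this
      · intro w _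
        exact mul_divByMonic_cancel_left w hv
      · intro n hn
        rw [Finset.mem_filter] at hn
        have := modByMonic_add_div n v
        rw [(modByMonic_eq_zero_iff_dvd hv).mpr hn.2, zero_add] at this
        rw [this]
    rw [hbij]
    simp_rw [mul_pow]
    rw [← Finset.mul_sum, ← powerSum_eq_sum, powerSum_eq_zero (by omega), mul_zero]
  have hsum := Finset.sum_filter_add_sum_filter_not (Mfin F i) (fun n => v ∣ n)
    (fun n => n ^ m)
  rw [hdvd, zero_add, htotal] at hsum
  exact hsum

lemma pow_N_sub_one (v : Polynomial F) (hv : v.Monic) (hvirr : Irreducible v)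
    (hd : 0 < v.natDegree) (e : ℕ) (he : 1 ≤ e) (n : Polynomial F) (hn : ¬ v ∣ n) :
    v ^ e ∣ n ^ ((Fintype.card F ^ v.natDegree - 1)
      * Fintype.card F ^ ((e - 1) * v.natDegree)) - 1 := by
  haveI : Fact (Irreducible v) := ⟨hvirr⟩
  set d := v.natDegree with hddef
  set q := Fintype.card F with hqdef
  have hq2 : 2 ≤ q := Fintype.one_lt_card
  let b : Module.Basis (Fin d) F (AdjoinRoot v) := AdjoinRoot.powerBasisAux' hv
  haveI : Fintype (AdjoinRoot v) := Fintype.ofEquiv _ b.equivFun.toEquiv.symm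
  have hcard : Fintype.card (AdjoinRoot v) = q ^ d := by
    rw [Module.card_fintype b, Fintype.card_fin]
  have hx : (AdjoinRoot.mk v n) ≠ 0 := by rwa [Ne, AdjoinRoot.mk_eq_zero]
  have hpow : (AdjoinRoot.mk v n) ^ (q ^ d - 1) = 1 := by
    rw [← hcard]; exact FiniteField.pow_card_sub_one_eq_one _ hx
  have hstep1 : v ∣ n ^ (q ^ d - 1) - 1 := by
    rw [← AdjoinRoot.mk_eq_zero, map_sub, map_pow, map_one, hpow, sub_self]
  obtain ⟨t, ht⟩ := hstep1
  have hn1 : n ^ (q ^ d - 1) = 1 + v * t := by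
    rw [sub_eq_iff_eq_add] at ht; rw [ht]; ring
  set p := ringChar F with hpdef
  obtain ⟨s, hp, hqp⟩ := FiniteField.card F p
  haveI : Fact p.Prime := ⟨hp⟩
  have hqp' : q = p ^ (s : ℕ) := hqp
  have hQ : q ^ ((e - 1) * d) = p ^ ((s : ℕ) * ((e - 1) * d)) := by
    rw [hqp', ← pow_mul]
  have key : n ^ ((q ^ d - 1) * q ^ ((e - 1) * d)) - 1 = (v * t) ^ (q ^ ((e - 1) * d)) := by
    rw [pow_mul, hn1, hQ, add_pow_char_pow, one_pow, add_sub_cancel_left]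
  rw [key, mul_pow]
  have heQ : e ≤ q ^ ((e - 1) * d) := by
    calc e ≤ 2 ^ (e - 1) := by
          have h2 := Nat.lt_two_pow_self (n := e - 1)
          omega
      _ ≤ 2 ^ ((e - 1) * d) := Nat.pow_le_pow_right (by norm_num)
          (Nat.le_mul_of_pos_right _ hd)
      _ ≤ q ^ ((e - 1) * d) := Nat.pow_le_pow_left hq2 _
  exact (pow_dvd_pow v heQ).mul_right _

lemma pow_congr_dvd (v : Polynomial F) (hv : v.Monic) (hvirr : Irreducible v)
    (hd : 0 < v.natDegree) (e : ℕ) (he : 1 ≤ e) (n : Polynomial F) (hn : ¬ v ∣ n)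
    {m l : ℕ} (h : m ≡ l [MOD (Fintype.card F ^ v.natDegree - 1)
      * Fintype.card F ^ ((e - 1) * v.natDegree)]) :
    v ^ e ∣ n ^ m - n ^ l := by
  set N := (Fintype.card F ^ v.natDegree - 1) * Fintype.card F ^ ((e - 1) * v.natDegree)
    with hN
  have main : ∀ m' l' : ℕ, l' ≤ m' → m' ≡ l' [MOD N] → v ^ e ∣ n ^ m' - n ^ l' := by
    intro m' l' hle hml
    have hdvd : N ∣ m' - l' := (Nat.modEq_iff_dvd' hle).mp hml.symm
    obtain ⟨c, hc⟩ := hdvd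
    have hm : m' = l' + N * c := by omega
    have : n ^ m' - n ^ l' = n ^ l' * ((n ^ N) ^ c - 1) := by
      rw [hm, pow_add, pow_mul]; ring
    rw [this]
    refine Dvd.dvd.mul_left ?_ _
    have h1 : n ^ N - 1 ∣ (n ^ N) ^ c - 1 := by
      have := sub_dvd_pow_sub_pow (n ^ N) 1 c
      rwa [one_pow] at this
    exact dvd_trans (pow_N_sub_one v hv hvirr hd e he n hn) h1
  rcases le_total l m with hle | hle
  · exact main m l hle h
  · have := main l m hle h.symm
    rw [← dvd_neg] at this
    simpa using this

lemma powerSumV_sub_dvd (v : Polynomial F) (hv : v.Monic) (hvirr : Irreducible v)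
    (hd : 0 < v.natDegree) (e : ℕ) (he : 1 ≤ e) (i : ℕ) {m l : ℕ}
    (h : m ≡ l [MOD (Fintype.card F ^ v.natDegree - 1)
      * Fintype.card F ^ ((e - 1) * v.natDegree)]) :
    v ^ e ∣ powerSumV F v i m - powerSumV F v i l := by
  rw [powerSumV_eq_sum, powerSumV_eq_sum, ← Finset.sum_sub_distrib]
  refine Finset.dvd_sum fun n hn => ?_
  rw [mem_Pfin] at hn
  exact pow_congr_dvd v hv hvirr hd e he n hn.2.2 h

lemma prod_sub_prod_dvd {ι : Type*} (x : Polynomial F) (s : Finset ι)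
    (f g : ι → Polynomial F) (h : ∀ i ∈ s, x ∣ f i - g i) :
    x ∣ ∏ i ∈ s, f i - ∏ i ∈ s, g i := by
  induction s using Finset.cons_induction with
  | empty => simp
  | cons a s ha ih =>
    rw [Finset.prod_cons, Finset.prod_cons]
    have heq : f a * ∏ i ∈ s, f i - g a * ∏ i ∈ s, g i
        = (f a - g a) * ∏ i ∈ s, f i + g a * (∏ i ∈ s, f i - ∏ i ∈ s, g i) := by ring
    rw [heq]
    exact dvd_add ((h a (Finset.mem_cons_self _ _)).mul_right _)
      ((ih fun i hi => h i (Finset.mem_cons_of_mem hi)).mul_left _)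

end KummerAux

/-- Kummer-type congruence for v-adic multiple zeta values:
if `m_i ≡ l_i mod (q^d - 1)·q^{(e-1)d}` for all `1 ≤ i ≤ r`, then
`v^e ∣ ζ_v(-m_1, …, -m_r) - ζ_v(-l_1, …, -l_r)`. -/
theorem zetaV_kummer (F : Type*) [Field F] [Fintype F] (v : Polynomial F)
    (hv : v.Monic) (hvirr : Irreducible v) (hd : 0 < v.natDegree)
    (e r : ℕ) (he : 1 ≤ e) (hr : 1 ≤ r) (m l : ℕ → ℕ)
    (h : ∀ i < r, m i ≡ l i
      [MOD (Fintype.card F ^ v.natDegree - 1) *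
        Fintype.card F ^ ((e - 1) * v.natDegree)]) :
    v ^ e ∣ zetaV F v r m - zetaV F v r l := by
  classical
  set d := v.natDegree with hddef
  set B := (Finset.range r).sup (fun j => max (m j) (l j)) + d with hB
  have hTfin : {i : Fin r → ℕ | StrictAnti i ∧ ∀ j, i j ≤ B}.Finite := by
    refine Set.Finite.subset (Set.Finite.pi (fun _ : Fin r => Set.finite_Iic B)) ?_
    intro i hi
    simp only [Set.mem_pi, Set.mem_univ, Set.mem_Iic]
    exact fun j _ => hi.2 j
  have hcover : ∀ mm : ℕ → ℕ, (∀ j < r, mm j + d ≤ B) →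
      zetaV F v r mm = ∑ i ∈ hTfin.toFinset, ∏ j : Fin r, powerSumV F v (i j) (mm (j : ℕ)) := by
    intro mm hmm
    refine finsum_mem_eq_sum_of_inter_support_eq _ ?_
    ext i
    simp only [Set.mem_inter_iff, Set.mem_setOf_eq, Function.mem_support,
      Set.Finite.coe_toFinset]
    constructor
    · rintro ⟨hsa, hne⟩
      refine ⟨⟨hsa, fun j => ?_⟩, hne⟩
      by_contra hgt
      push_neg at hgt
      apply hne
      refine Finset.prod_eq_zero (Finset.mem_univ j) ?_
      exact sum_Pfin_eq v hv hd (by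
        have := hmm (j : ℕ) j.isLt
        omega)
    · rintro ⟨⟨hsa, _⟩, hne⟩
      exact ⟨hsa, hne⟩
  have hbm : ∀ j < r, m j + d ≤ B := by
    intro j hj
    have : m j ≤ (Finset.range r).sup (fun k => max (m k) (l k)) :=
      le_trans (le_max_left _ _)
        (Finset.le_sup (f := fun k => max (m k) (l k)) (Finset.mem_range.mpr hj))
    omega
  have hbl : ∀ j < r, l j + d ≤ B := by
    intro j hj
    have : l j ≤ (Finset.range r).sup (fun k => max (m k) (l k)) :=
      le_trans (le_max_right _ _)
        (Finset.le_sup (f := fun k => max (m k) (l k)) (Finset.mem_range.mpr hj))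
    omega
  rw [hcover m hbm, hcover l hbl, ← Finset.sum_sub_distrib]
  refine Finset.dvd_sum fun i _ => ?_
  refine prod_sub_prod_dvd _ _ _ _ fun j _ => ?_
  exact powerSumV_sub_dvd v hv hvirr hd e he (i j) (h (j : ℕ) j.isLt)
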